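/- Assume no three of the control points are collinear (λi ≠ 0 for i = 0,1,2,3), all weights are nonzero, φ1 ≠ 0, φ2 ≠ 0, and D := φ1²u2u3 − φ1φ2u1u2 + φ2φ3u1² ≠ 0. Define the point s = (φ1²u2u3·c0 − φ1φ2u1u2·c2 + φ2φ3u1²·c3)/D (a barycentric combination of c0, c2, c3). Then S̃1(s) = 0 and S̃2(s) = 0, and consequently q(s) = 0 and ∇q(s) = (0,0); i.e., s is the double point of the curve. -/

import Mathlib

noncomputable section

/-- Determinant of the matrix [[x, y, 1], [a₁, a₂, 1], [b₁, b₂, 1]]. -/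
def det3 (x y a₁ a₂ b₁ b₂ : ℝ) : ℝ :=
  x * (a₂ - b₂) - y * (a₁ - b₁) + (a₁ * b₂ - a₂ * b₁)

/-- L_{ij}(x,y): the implicit linear form of the line through points `p` and `q`. -/
def lineL (p q : ℝ × ℝ) (x y : ℝ) : ℝ := det3 x y p.1 p.2 q.1 q.2

/-- λ_{ijk}: determinant of [[p₁,p₂,1],[q₁,q₂,1],[r₁,r₂,1]]. -/
def lam (p q r : ℝ × ℝ) : ℝ := det3 p.1 p.2 q.1 q.2 r.1 r.2

/-- Gradient of a bivariate function. -/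
def grad (f : ℝ → ℝ → ℝ) (x y : ℝ) : ℝ × ℝ :=
  (deriv (fun s => f s y) x, deriv (fun s => f x s) y)

lemma lineL_hasDerivAt_x (p q : ℝ × ℝ) (y x : ℝ) :
    HasDerivAt (fun t => lineL p q t y) (p.2 - q.2) x := by
  have h : (fun t => lineL p q t y)
      = fun t => (p.2 - q.2) * t + (-(y * (p.1 - q.1)) + (p.1 * q.2 - p.2 * q.1)) := by
    funext t; simp only [lineL, det3]; ring
  rw [h]
  simpa using ((hasDerivAt_id x).const_mul (p.2 - q.2)).add_const
    (-(y * (p.1 - q.1)) + (p.1 * q.2 - p.2 * q.1))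

lemma lineL_hasDerivAt_y (p q : ℝ × ℝ) (x y : ℝ) :
    HasDerivAt (fun t => lineL p q x t) (-(p.1 - q.1)) y := by
  have h : (fun t => lineL p q x t)
      = fun t => (-(p.1 - q.1)) * t + (x * (p.2 - q.2) + (p.1 * q.2 - p.2 * q.1)) := by
    funext t; simp only [lineL, det3]; ring
  rw [h]
  simpa using ((hasDerivAt_id y).const_mul (-(p.1 - q.1))).add_const
    (x * (p.2 - q.2) + (p.1 * q.2 - p.2 * q.1))

/-- the barycentric combination of `c0, c2, c3` giving the double point. -/
theorem double_point_barycentric_c0c2c3 (c0 c1 c2 c3 : ℝ × ℝ) (w0 w1 w2 w3 : ℝ)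
    (hw0 : w0 ≠ 0) (hw1 : w1 ≠ 0) (hw2 : w2 ≠ 0) (hw3 : w3 ≠ 0)
    (u0 u1 u2 u3 : ℝ)
    (hu0 : u0 = w0) (hu1 : u1 = 3 * w1) (hu2 : u2 = 3 * w2) (hu3 : u3 = w3)
    (l0 l1 l2 l3 : ℝ)
    (hl0 : l0 = lam c3 c2 c1) (hl1 : l1 = lam c2 c3 c0)
    (hl2 : l2 = lam c1 c0 c3) (hl3 : l3 = lam c0 c1 c2)
    (hnc0 : l0 ≠ 0) (hnc1 : l1 ≠ 0) (hnc2 : l2 ≠ 0) (hnc3 : l3 ≠ 0)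
    (K0 K1 K2 K3 : ℝ → ℝ → ℝ)
    (hK0 : ∀ x y, K0 x y = lineL c0 c1 x y * lineL c1 c2 x y * lineL c2 c3 x y)
    (hK1 : ∀ x y, K1 x y = lineL c0 c1 x y * (lineL c1 c3 x y) ^ 2)
    (hK2 : ∀ x y, K2 x y = (lineL c0 c2 x y) ^ 2 * lineL c2 c3 x y)
    (hK3 : ∀ x y, K3 x y = (lineL c0 c3 x y) ^ 3)
    (U L b0 b1 b2 b3 : ℝ)
    (hU : U = u0 * u1 * u2 * u3) (hL : L = l0 * l1 * l2 * l3)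
    (hb0 : b0 = -(l1 ^ 2 * l2 ^ 2 * U - u1 ^ 2 * u2 ^ 2 * L))
    (hb1 : b1 = l1 ^ 3 * l3 * U - u1 ^ 3 * u3 * L)
    (hb2 : b2 = l0 * l2 ^ 3 * U - u0 * u2 ^ 3 * L)
    (hb3 : b3 = l0 ^ 2 * l3 ^ 2 * U - u0 ^ 2 * u3 ^ 2 * L)
    (q : ℝ → ℝ → ℝ)
    (hq : ∀ x y, q x y = b0 * K0 x y + b1 * K1 x y + b2 * K2 x y + b3 * K3 x y)
    (phi1 phi2 phi3 : ℝ)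
    (hphi1 : phi1 = u0 * u2 * l1 ^ 2 - u1 ^ 2 * l0 * l2)
    (hphi2 : phi2 = u1 * u3 * l2 ^ 2 - u2 ^ 2 * l1 * l3)
    (hphi3 : phi3 = u1 * u2 * l0 * l3 - u0 * u3 * l1 * l2)
    (hphi1ne : phi1 ≠ 0) (hphi2ne : phi2 ≠ 0)
    (S1 S2 : ℝ → ℝ → ℝ)
    (hS1 : ∀ x y, S1 x y = u2 * phi1 * lineL c0 c2 x y - u1 * phi3 * lineL c0 c3 x y)
    (hS2 : ∀ x y, S2 x y = u1 * phi2 * lineL c1 c3 x y - u2 * phi3 * lineL c0 c3 x y)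
    (D : ℝ) (hD : D = phi1 ^ 2 * u2 * u3 - phi1 * phi2 * u1 * u2 + phi2 * phi3 * u1 ^ 2)
    (hDne : D ≠ 0)
    (s : ℝ × ℝ)
    (hs : s = D⁻¹ • ((phi1 ^ 2 * u2 * u3) • c0 - (phi1 * phi2 * u1 * u2) • c2 +
      (phi2 * phi3 * u1 ^ 2) • c3)) :
    S1 s.1 s.2 = 0 ∧ S2 s.1 s.2 = 0 ∧ q s.1 s.2 = 0 ∧ grad q s.1 s.2 = (0 : ℝ × ℝ) := by
  -- components of s
  have hs1 : D * s.1 = phi1 ^ 2 * u2 * u3 * c0.1 - phi1 * phi2 * u1 * u2 * c2.1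
      + phi2 * phi3 * u1 ^ 2 * c3.1 := by
    rw [hs]; simp only [Prod.smul_fst, Prod.fst_add, Prod.fst_sub, smul_eq_mul]; field_simp
  have hs2 : D * s.2 = phi1 ^ 2 * u2 * u3 * c0.2 - phi1 * phi2 * u1 * u2 * c2.2
      + phi2 * phi3 * u1 ^ 2 * c3.2 := by
    rw [hs]; simp only [Prod.smul_snd, Prod.snd_add, Prod.snd_sub, smul_eq_mul]; field_simp
  -- the six line values at s (times D), phi kept atomic
  have hB01 : D * lineL c0 c1 s.1 s.2
      = -(phi1 * phi2 * u1 * u2) * l3 - phi2 * phi3 * u1 ^ 2 * l2 := by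
    simp only [hl2, hl3, lineL, lam, det3]
    linear_combination (c0.2 - c1.2) * hs1 - (c0.1 - c1.1) * hs2
      + (c0.1 * c1.2 - c0.2 * c1.1) * hD
  have hA12 : D * lineL c1 c2 s.1 s.2
      = phi1 ^ 2 * u2 * u3 * l3 - phi2 * phi3 * u1 ^ 2 * l0 := by
    simp only [hl0, hl3, lineL, lam, det3]
    linear_combination (c1.2 - c2.2) * hs1 - (c1.1 - c2.1) * hs2
      + (c1.1 * c2.2 - c1.2 * c2.1) * hD
  have hA23 : D * lineL c2 c3 s.1 s.2 = phi1 ^ 2 * u2 * u3 * l1 := by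
    simp only [hl1, lineL, lam, det3]
    linear_combination (c2.2 - c3.2) * hs1 - (c2.1 - c3.1) * hs2
      + (c2.1 * c3.2 - c2.2 * c3.1) * hD
  have hB13 : D * lineL c1 c3 s.1 s.2
      = -(phi1 ^ 2 * u2 * u3) * l2 - phi1 * phi2 * u1 * u2 * l0 := by
    simp only [hl0, hl2, lineL, lam, det3]
    linear_combination (c1.2 - c3.2) * hs1 - (c1.1 - c3.1) * hs2
      + (c1.1 * c3.2 - c1.2 * c3.1) * hD
  have hA02 : D * lineL c0 c2 s.1 s.2 = phi2 * phi3 * u1 ^ 2 * l1 := by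
    simp only [hl1, lineL, lam, det3]
    linear_combination (c0.2 - c2.2) * hs1 - (c0.1 - c2.1) * hs2
      + (c0.1 * c2.2 - c0.2 * c2.1) * hD
  have hA03 : D * lineL c0 c3 s.1 s.2 = phi1 * phi2 * u1 * u2 * l1 := by
    simp only [hl1, lineL, lam, det3]
    linear_combination (c0.2 - c3.2) * hs1 - (c0.1 - c3.1) * hs2
      + (c0.1 * c3.2 - c0.2 * c3.1) * hD
  have hA01 : D * lineL c0 c1 s.1 s.2 = u0 * u1 * phi2 ^ 2 * l1 := by
    rw [hB01]; simp only [hphi1, hphi2, hphi3]; ring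
  have hA13 : D * lineL c1 c3 s.1 s.2 = phi1 * phi3 * u2 ^ 2 * l1 := by
    rw [hB13]; simp only [hphi1, hphi2, hphi3]; ring
  -- S1 and S2 vanish at s
  have hS1z : S1 s.1 s.2 = 0 := by
    have hh : D * S1 s.1 s.2 = 0 := by
      rw [hS1]
      linear_combination (u2 * phi1) * hA02 - (u1 * phi3) * hA03
    exact (mul_eq_zero.mp hh).resolve_left hDne
  have hS2z : S2 s.1 s.2 = 0 := by
    have hh : D * S2 s.1 s.2 = 0 := by
      rw [hS2]
      linear_combination (u1 * phi2) * hA13 - (u2 * phi3) * hA03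
    exact (mul_eq_zero.mp hh).resolve_left hDne
  -- q vanishes at s
  have hqz : q s.1 s.2 = 0 := by
    have hh : D ^ 3 * q s.1 s.2 = 0 := by
      calc D ^ 3 * q s.1 s.2
          = b0 * ((D * lineL c0 c1 s.1 s.2) * (D * lineL c1 c2 s.1 s.2)
              * (D * lineL c2 c3 s.1 s.2))
            + b1 * ((D * lineL c0 c1 s.1 s.2) * (D * lineL c1 c3 s.1 s.2) ^ 2)
            + b2 * ((D * lineL c0 c2 s.1 s.2) ^ 2 * (D * lineL c2 c3 s.1 s.2))
            + b3 * (D * lineL c0 c3 s.1 s.2) ^ 3 := by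
            rw [hq, hK0, hK1, hK2, hK3]; ring
        _ = b0 * ((u0 * u1 * phi2 ^ 2 * l1)
              * (phi1 ^ 2 * u2 * u3 * l3 - phi2 * phi3 * u1 ^ 2 * l0)
              * (phi1 ^ 2 * u2 * u3 * l1))
            + b1 * ((u0 * u1 * phi2 ^ 2 * l1) * (phi1 * phi3 * u2 ^ 2 * l1) ^ 2)
            + b2 * ((phi2 * phi3 * u1 ^ 2 * l1) ^ 2 * (phi1 ^ 2 * u2 * u3 * l1))
            + b3 * (phi1 * phi2 * u1 * u2 * l1) ^ 3 := by
            rw [hA01, hA12, hA23, hA13, hA02, hA03]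
        _ = 0 := by
            simp only [hb0, hb1, hb2, hb3, hU, hL, hphi1, hphi2, hphi3]; ring
    exact (mul_eq_zero.mp hh).resolve_left (pow_ne_zero 3 hDne)
  -- partial derivatives at s
  have hPx : deriv (fun t => q t s.2) s.1
      = b0 * ((c0.2 - c1.2) * (lineL c1 c2 s.1 s.2 * lineL c2 c3 s.1 s.2)
            + lineL c0 c1 s.1 s.2 * ((c1.2 - c2.2) * lineL c2 c3 s.1 s.2)
            + lineL c0 c1 s.1 s.2 * (lineL c1 c2 s.1 s.2 * (c2.2 - c3.2)))
        + b1 * ((c0.2 - c1.2) * lineL c1 c3 s.1 s.2 ^ 2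
            + lineL c0 c1 s.1 s.2 * (2 * lineL c1 c3 s.1 s.2 * (c1.2 - c3.2)))
        + b2 * (2 * lineL c0 c2 s.1 s.2 * (c0.2 - c2.2) * lineL c2 c3 s.1 s.2
            + lineL c0 c2 s.1 s.2 ^ 2 * (c2.2 - c3.2))
        + b3 * (3 * lineL c0 c3 s.1 s.2 ^ 2 * (c0.2 - c3.2)) := by
    have hfun : (fun t => q t s.2)
        = fun t => b0 * (lineL c0 c1 t s.2 * lineL c1 c2 t s.2 * lineL c2 c3 t s.2)
          + (b1 * (lineL c0 c1 t s.2 * lineL c1 c3 t s.2 ^ 2)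
          + (b2 * (lineL c0 c2 t s.2 ^ 2 * lineL c2 c3 t s.2)
          + b3 * lineL c0 c3 t s.2 ^ 3)) := by
      funext t; rw [hq, hK0, hK1, hK2, hK3]; ring
    rw [hfun]
    have Hx := ((((lineL_hasDerivAt_x c0 c1 s.2 s.1).mul
        (lineL_hasDerivAt_x c1 c2 s.2 s.1)).mul
        (lineL_hasDerivAt_x c2 c3 s.2 s.1)).const_mul b0).add
      ((((lineL_hasDerivAt_x c0 c1 s.2 s.1).mul
        ((lineL_hasDerivAt_x c1 c3 s.2 s.1).pow 2)).const_mul b1).add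
      (((((lineL_hasDerivAt_x c0 c2 s.2 s.1).pow 2).mul
        (lineL_hasDerivAt_x c2 c3 s.2 s.1)).const_mul b2).add
      (((lineL_hasDerivAt_x c0 c3 s.2 s.1).pow 3).const_mul b3)))
    exact Hx.deriv.trans (by simp only [Pi.mul_apply, Pi.pow_apply]; push_cast; ring)
  have hPy : deriv (fun t => q s.1 t) s.2
      = b0 * ((-(c0.1 - c1.1)) * (lineL c1 c2 s.1 s.2 * lineL c2 c3 s.1 s.2)
            + lineL c0 c1 s.1 s.2 * ((-(c1.1 - c2.1)) * lineL c2 c3 s.1 s.2)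
            + lineL c0 c1 s.1 s.2 * (lineL c1 c2 s.1 s.2 * (-(c2.1 - c3.1))))
        + b1 * ((-(c0.1 - c1.1)) * lineL c1 c3 s.1 s.2 ^ 2
            + lineL c0 c1 s.1 s.2 * (2 * lineL c1 c3 s.1 s.2 * (-(c1.1 - c3.1))))
        + b2 * (2 * lineL c0 c2 s.1 s.2 * (-(c0.1 - c2.1)) * lineL c2 c3 s.1 s.2
            + lineL c0 c2 s.1 s.2 ^ 2 * (-(c2.1 - c3.1)))
        + b3 * (3 * lineL c0 c3 s.1 s.2 ^ 2 * (-(c0.1 - c3.1))) := by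
    have hfun : (fun t => q s.1 t)
        = fun t => b0 * (lineL c0 c1 s.1 t * lineL c1 c2 s.1 t * lineL c2 c3 s.1 t)
          + (b1 * (lineL c0 c1 s.1 t * lineL c1 c3 s.1 t ^ 2)
          + (b2 * (lineL c0 c2 s.1 t ^ 2 * lineL c2 c3 s.1 t)
          + b3 * lineL c0 c3 s.1 t ^ 3)) := by
      funext t; rw [hq, hK0, hK1, hK2, hK3]; ring
    rw [hfun]
    have Hy := ((((lineL_hasDerivAt_y c0 c1 s.1 s.2).mul
        (lineL_hasDerivAt_y c1 c2 s.1 s.2)).mul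
        (lineL_hasDerivAt_y c2 c3 s.1 s.2)).const_mul b0).add
      ((((lineL_hasDerivAt_y c0 c1 s.1 s.2).mul
        ((lineL_hasDerivAt_y c1 c3 s.1 s.2).pow 2)).const_mul b1).add
      (((((lineL_hasDerivAt_y c0 c2 s.1 s.2).pow 2).mul
        (lineL_hasDerivAt_y c2 c3 s.1 s.2)).const_mul b2).add
      (((lineL_hasDerivAt_y c0 c3 s.1 s.2).pow 3).const_mul b3)))
    exact Hy.deriv.trans (by simp only [Pi.mul_apply, Pi.pow_apply]; push_cast; ring)
  -- directional pairing lemmas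
  have hd201 : (c2.1 - c0.1) * (c0.2 - c1.2) + (c2.2 - c0.2) * (-(c0.1 - c1.1)) = l3 := by
    rw [hl3]; simp only [lam, det3]; ring
  have hd212 : (c2.1 - c0.1) * (c1.2 - c2.2) + (c2.2 - c0.2) * (-(c1.1 - c2.1)) = -l3 := by
    rw [hl3]; simp only [lam, det3]; ring
  have hd223 : (c2.1 - c0.1) * (c2.2 - c3.2) + (c2.2 - c0.2) * (-(c2.1 - c3.1)) = -l1 := by
    rw [hl1]; simp only [lam, det3]; ring
  have hd213 : (c2.1 - c0.1) * (c1.2 - c3.2) + (c2.2 - c0.2) * (-(c1.1 - c3.1))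
      = l0 + l2 := by
    rw [hl0, hl2]; simp only [lam, det3]; ring
  have hd203 : (c2.1 - c0.1) * (c0.2 - c3.2) + (c2.2 - c0.2) * (-(c0.1 - c3.1)) = -l1 := by
    rw [hl1]; simp only [lam, det3]; ring
  have hd301 : (c3.1 - c0.1) * (c0.2 - c1.2) + (c3.2 - c0.2) * (-(c0.1 - c1.1)) = -l2 := by
    rw [hl2]; simp only [lam, det3]; ring
  have hd312 : (c3.1 - c0.1) * (c1.2 - c2.2) + (c3.2 - c0.2) * (-(c1.1 - c2.1))
      = -l0 - l3 := by
    rw [hl0, hl3]; simp only [lam, det3]; ring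
  have hd323 : (c3.1 - c0.1) * (c2.2 - c3.2) + (c3.2 - c0.2) * (-(c2.1 - c3.1)) = -l1 := by
    rw [hl1]; simp only [lam, det3]; ring
  have hd313 : (c3.1 - c0.1) * (c1.2 - c3.2) + (c3.2 - c0.2) * (-(c1.1 - c3.1)) = l2 := by
    rw [hl2]; simp only [lam, det3]; ring
  have hd302 : (c3.1 - c0.1) * (c0.2 - c2.2) + (c3.2 - c0.2) * (-(c0.1 - c2.1)) = l1 := by
    rw [hl1]; simp only [lam, det3]; ring
  have hdet : (c2.1 - c0.1) * (c3.2 - c0.2) - (c3.1 - c0.1) * (c2.2 - c0.2) = l1 := by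
    rw [hl1]; simp only [lam, det3]; ring
  -- the two directional derivatives at s vanish
  have step2 : b0 * (l3 * ((D * lineL c1 c2 s.1 s.2) * (D * lineL c2 c3 s.1 s.2))
        + (D * lineL c0 c1 s.1 s.2) * (-l3) * (D * lineL c2 c3 s.1 s.2)
        + (D * lineL c0 c1 s.1 s.2) * (D * lineL c1 c2 s.1 s.2) * (-l1))
      + b1 * (l3 * (D * lineL c1 c3 s.1 s.2) ^ 2
        + 2 * (D * lineL c0 c1 s.1 s.2) * (D * lineL c1 c3 s.1 s.2) * (l0 + l2))
      + b2 * ((D * lineL c0 c2 s.1 s.2) ^ 2 * (-l1))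
      + b3 * (3 * (D * lineL c0 c3 s.1 s.2) ^ 2 * (-l1)) = 0 := by
    rw [hA01, hA12, hA23, hA13, hA02, hA03]
    simp only [hb0, hb1, hb2, hb3, hU, hL, hphi1, hphi2, hphi3]; ring
  have step3 : b0 * ((-l2) * ((D * lineL c1 c2 s.1 s.2) * (D * lineL c2 c3 s.1 s.2))
        + (D * lineL c0 c1 s.1 s.2) * (-l0 - l3) * (D * lineL c2 c3 s.1 s.2)
        + (D * lineL c0 c1 s.1 s.2) * (D * lineL c1 c2 s.1 s.2) * (-l1))
      + b1 * ((-l2) * (D * lineL c1 c3 s.1 s.2) ^ 2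
        + 2 * (D * lineL c0 c1 s.1 s.2) * (D * lineL c1 c3 s.1 s.2) * l2)
      + b2 * (2 * (D * lineL c0 c2 s.1 s.2) * l1 * (D * lineL c2 c3 s.1 s.2)
        + (D * lineL c0 c2 s.1 s.2) ^ 2 * (-l1)) = 0 := by
    rw [hA01, hA12, hA23, hA13, hA02]
    simp only [hb0, hb1, hb2, hb3, hU, hL, hphi1, hphi2, hphi3]; ring
  have h2 : (c2.1 - c0.1) * (D ^ 2 * deriv (fun t => q t s.2) s.1)
      + (c2.2 - c0.2) * (D ^ 2 * deriv (fun t => q s.1 t) s.2) = 0 := by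
    rw [hPx, hPy]
    linear_combination
      (b0 * ((D * lineL c1 c2 s.1 s.2) * (D * lineL c2 c3 s.1 s.2))
        + b1 * (D * lineL c1 c3 s.1 s.2) ^ 2) * hd201
      + (b0 * ((D * lineL c0 c1 s.1 s.2) * (D * lineL c2 c3 s.1 s.2))) * hd212
      + (b0 * ((D * lineL c0 c1 s.1 s.2) * (D * lineL c1 c2 s.1 s.2))
        + b2 * (D * lineL c0 c2 s.1 s.2) ^ 2) * hd223
      + (2 * b1 * ((D * lineL c0 c1 s.1 s.2) * (D * lineL c1 c3 s.1 s.2))) * hd213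
      + (3 * b3 * (D * lineL c0 c3 s.1 s.2) ^ 2) * hd203
      + step2
  have h3 : (c3.1 - c0.1) * (D ^ 2 * deriv (fun t => q t s.2) s.1)
      + (c3.2 - c0.2) * (D ^ 2 * deriv (fun t => q s.1 t) s.2) = 0 := by
    rw [hPx, hPy]
    linear_combination
      (b0 * ((D * lineL c1 c2 s.1 s.2) * (D * lineL c2 c3 s.1 s.2))
        + b1 * (D * lineL c1 c3 s.1 s.2) ^ 2) * hd301
      + (b0 * ((D * lineL c0 c1 s.1 s.2) * (D * lineL c2 c3 s.1 s.2))) * hd312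
      + (b0 * ((D * lineL c0 c1 s.1 s.2) * (D * lineL c1 c2 s.1 s.2))
        + b2 * (D * lineL c0 c2 s.1 s.2) ^ 2) * hd323
      + (2 * b1 * ((D * lineL c0 c1 s.1 s.2) * (D * lineL c1 c3 s.1 s.2))) * hd313
      + (2 * b2 * ((D * lineL c0 c2 s.1 s.2) * (D * lineL c2 c3 s.1 s.2))) * hd302
      + step3
  have hXz : deriv (fun t => q t s.2) s.1 = 0 := by
    have hW : l1 * (D ^ 2 * deriv (fun t => q t s.2) s.1) = 0 := by
      linear_combination (c3.2 - c0.2) * h2 - (c2.2 - c0.2) * h3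
        - (D ^ 2 * deriv (fun t => q t s.2) s.1) * hdet
    have h' := (mul_eq_zero.mp hW).resolve_left hnc1
    exact (mul_eq_zero.mp h').resolve_left (pow_ne_zero 2 hDne)
  have hYz : deriv (fun t => q s.1 t) s.2 = 0 := by
    have hW : l1 * (D ^ 2 * deriv (fun t => q s.1 t) s.2) = 0 := by
      linear_combination (c2.1 - c0.1) * h3 - (c3.1 - c0.1) * h2
        - (D ^ 2 * deriv (fun t => q s.1 t) s.2) * hdet
    have h' := (mul_eq_zero.mp hW).resolve_left hnc1
    exact (mul_eq_zero.mp h').resolve_left (pow_ne_zero 2 hDne)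
  refine ⟨hS1z, hS2z, hqz, ?_⟩
  simp only [grad]
  rw [hXz, hYz]
  rfl
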